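/- Let μ_x, μ_y, θ_y > 0, α ∈ (0, 1], η_z = μ_x/2, η_y = min{1/(2μ_y), θ_y/(2α)}. Let z^k, z_f^k, z_g^k, z_f^{k+1}, z^{k+1}, z*, x_f^{k+1} ∈ ℝ^{d_x} and y^k, y_f^k, y_g^k, y_f^{k+1}, y^{k+1}, y*, w_f^{k+1} ∈ ℝ^{d_y} satisfy: z_g^k = α z^k + (1−α) z_f^k, y_g^k = α y^k + (1−α) y_f^k, z^{k+1} = z^k + η_z μ_x^{−1}(z_f^{k+1} − z^k) − η_z(x_f^{k+1} + μ_x^{−1} z_f^{k+1}), y^{k+1} = y^k + η_y μ_y(y_f^{k+1} − y^k) − η_y(w_f^{k+1} + μ_y y_f^{k+1}), and the inexactness condition (8/μ_x)‖z_f^{k+1} + (μ_x/2)(x_f^{k+1} − μ_x^{−1} z_g^k)‖² + θ_y‖w_f^{k+1} + μ_y y_f^{k+1} + θ_y^{−1}(y_f^{k+1} − y_g^k)‖² ≤ (μ_x/8)‖x_f^{k+1} + μ_x^{−1} z_g^k‖² + θ_y^{−1}‖y_f^{k+1} − y_g^k‖². Let P : ℝ^{d_x} × ℝ^{d_y} →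 ℝ ∪ {+∞} be a function which is finite at (z_f^k, y_f^k), (z_f^{k+1}, y_f^{k+1}) and (z*, y*), attains its minimum at (z*, y*), and satisfies the strong subgradient inequality P(z, y) ≥ P(z_f^{k+1}, y_f^{k+1}) + ⟨x_f^{k+1} + μ_x^{−1} z_f^{k+1}, z − z_f^{k+1}⟩ + ⟨w_f^{k+1} + μ_y y_f^{k+1}, y − y_f^{k+1}⟩ + (1/(2μ_x))‖z − z_f^{k+1}‖² + (μ_y/2)‖y − y_f^{k+1}‖² for all (z, y). Define the Lyapunov function L^k = (1/η_z)‖z^k − z*‖² + (1/η_y)‖y^k − y*‖² + (2/α)(P(z_f^k, y_f^k) − P(z*, y*)) and L^{k+1} analogously. Then L^{k+1} ≤ (1 − 1/max{2/α, 2α/(θ_y μ_y)}) · L^k. -/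

import Mathlib

open scoped RealInnerProductSpace

noncomputable section

private lemma stmt8_nsq {E : Type*} [NormedAddCommGroup E] [NormedSpace ℝ E] (c : ℝ) (w : E) :
    ‖c • w‖ ^ 2 = c ^ 2 * ‖w‖ ^ 2 := by
  rw [norm_smul, Real.norm_eq_abs, mul_pow, sq_abs]

private lemma stmt8_combo2 {E : Type*} [NormedAddCommGroup E] [InnerProductSpace ℝ E]
    (c1 c2 : ℝ) (x y : E) :
    ‖c1 • x + c2 • y‖ ^ 2 = c1 ^ 2 * ‖x‖ ^ 2 + c2 ^ 2 * ‖y‖ ^ 2 + 2 * c1 * c2 * ⟪x, y⟫ := by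
  simp only [← real_inner_self_eq_norm_sq, inner_add_left, inner_add_right,
    real_inner_smul_left, real_inner_smul_right]
  linear_combination (-c1 * c2) * real_inner_comm y x

private lemma stmt8_combo3 {E : Type*} [NormedAddCommGroup E] [InnerProductSpace ℝ E]
    (c1 c2 c3 : ℝ) (x y w : E) :
    ‖c1 • x + c2 • y + c3 • w‖ ^ 2 = c1 ^ 2 * ‖x‖ ^ 2 + c2 ^ 2 * ‖y‖ ^ 2 + c3 ^ 2 * ‖w‖ ^ 2
      + 2 * c1 * c2 * ⟪x, y⟫ + 2 * c1 * c3 * ⟪x, w⟫ + 2 * c2 * c3 * ⟪y, w⟫ := by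
  simp only [← real_inner_self_eq_norm_sq, inner_add_left, inner_add_right,
    real_inner_smul_left, real_inner_smul_right]
  linear_combination (-c1*c2) * real_inner_comm y x + (-c1*c3) * real_inner_comm w x
    + (-c2*c3) * real_inner_comm w y

set_option maxHeartbeats 2000000 in
/-- Lemma `pp:lem:3` in the paper. Lyapunov contraction for one iteration of
the accelerated proximal point algorithm. -/
theorem stmt_8 {dx dy : ℕ}
    (μx μy θy α ηz ηy : ℝ) (hμx : 0 < μx) (hμy : 0 < μy) (hθy : 0 < θy)
    (hα0 : 0 < α) (hα1 : α ≤ 1)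
    (hηz : ηz = μx / 2) (hηy : ηy = min (1 / (2 * μy)) (θy / (2 * α)))
    (zk zfk zgk zfk1 zk1 zstar xfk1 : EuclideanSpace ℝ (Fin dx))
    (yk yfk ygk yfk1 yk1 ystar wfk1 : EuclideanSpace ℝ (Fin dy))
    (hzg : zgk = α • zk + (1 - α) • zfk)
    (hyg : ygk = α • yk + (1 - α) • yfk)
    (hzstep : zk1 = zk + (ηz * μx⁻¹) • (zfk1 - zk) - ηz • (xfk1 + μx⁻¹ • zfk1))
    (hystep : yk1 = yk + (ηy * μy) • (yfk1 - yk) - ηy • (wfk1 + μy • yfk1))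
    (hinexact :
      (8 / μx) * ‖zfk1 + (μx / 2) • (xfk1 - μx⁻¹ • zgk)‖ ^ 2
          + θy * ‖wfk1 + μy • yfk1 + θy⁻¹ • (yfk1 - ygk)‖ ^ 2
        ≤ (μx / 8) * ‖xfk1 + μx⁻¹ • zgk‖ ^ 2 + θy⁻¹ * ‖yfk1 - ygk‖ ^ 2)
    (P : EuclideanSpace ℝ (Fin dx) → EuclideanSpace ℝ (Fin dy) → EReal)
    (hPbot : ∀ z y, P z y ≠ ⊥)
    (hfin0 : P zfk yfk < ⊤) (hfin1 : P zfk1 yfk1 < ⊤) (hfinstar : P zstar ystar < ⊤)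
    (hmin : ∀ z y, P zstar ystar ≤ P z y)
    (hsubgrad : ∀ z y, P zfk1 yfk1
        + ((⟪xfk1 + μx⁻¹ • zfk1, z - zfk1⟫ + ⟪wfk1 + μy • yfk1, y - yfk1⟫
            + 1 / (2 * μx) * ‖z - zfk1‖ ^ 2 + μy / 2 * ‖y - yfk1‖ ^ 2 : ℝ) : EReal)
        ≤ P z y) :
    (((1 / ηz) * ‖zk1 - zstar‖ ^ 2 + (1 / ηy) * ‖yk1 - ystar‖ ^ 2 : ℝ) : EReal)
        + ((2 / α : ℝ) : EReal) * (P zfk1 yfk1 - P zstar ystar)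
      ≤ ((1 - 1 / max (2 / α) (2 * α / (θy * μy)) : ℝ) : EReal) *
          ((((1 / ηz) * ‖zk - zstar‖ ^ 2 + (1 / ηy) * ‖yk - ystar‖ ^ 2 : ℝ) : EReal)
            + ((2 / α : ℝ) : EReal) * (P zfk yfk - P zstar ystar)) := by
  have hμx0 : μx ≠ 0 := ne_of_gt hμx
  have hμy0 : μy ≠ 0 := ne_of_gt hμy
  have hθy0 : θy ≠ 0 := ne_of_gt hθy
  have hα0' : α ≠ 0 := ne_of_gt hα0
  have hηypos : 0 < ηy := by
    rw [hηy]; exact lt_min (by positivity) (by positivity)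
  have hηy0 : ηy ≠ 0 := ne_of_gt hηypos
  -- parameter facts
  have hηyμy : ηy * μy ≤ 1 / 2 := by
    have h1 : ηy ≤ 1 / (2 * μy) := hηy ▸ min_le_left _ _
    have h2 : (1 / (2 * μy)) * μy = 1 / 2 := by field_simp; try ring
    nlinarith
  have hθηα : 2 * α * ηy ≤ θy := by
    have h1 : ηy ≤ θy / (2 * α) := hηy ▸ min_le_right _ _
    have h2 : 2 * α * (θy / (2 * α)) = θy := by field_simp
    nlinarith
  -- facts about the contraction factor
  set m := 1 / max (2 / α) (2 * α / (θy * μy)) with hmdef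
  have hmax1 : (2 / α) ≤ max (2 / α) (2 * α / (θy * μy)) := le_max_left _ _
  have hmax2 : (2 * α / (θy * μy)) ≤ max (2 / α) (2 * α / (θy * μy)) := le_max_right _ _
  have hm0 : 0 < m := by
    rw [hmdef]
    have : (0:ℝ) < max (2 / α) (2 * α / (θy * μy)) := lt_of_lt_of_le (by positivity) hmax1
    positivity
  have hm1 : 2 * m ≤ α := by
    have h1 : m ≤ 1 / (2 / α) := by
      rw [hmdef]
      exact one_div_le_one_div_of_le (by positivity) hmax1
    rw [one_div_div] at h1
    linarith
  have hm2 : m ≤ ηy * μy := by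
    have hA : m ≤ α / 2 := by linarith
    have hB : m ≤ θy * μy / (2 * α) := by
      have h1 : m ≤ 1 / (2 * α / (θy * μy)) := by
        rw [hmdef]
        exact one_div_le_one_div_of_le (by positivity) hmax2
      rwa [one_div_div] at h1
    rcases le_total (1 / (2 * μy)) (θy / (2 * α)) with h | h
    · rw [hηy, min_eq_left h]
      have h2 : (1 / (2 * μy)) * μy = 1 / 2 := by field_simp; try ring
      rw [h2]; linarith
    · rw [hηy, min_eq_right h]
      have h2 : (θy / (2 * α)) * μy = θy * μy / (2 * α) := by ring
      rw [h2]; exact hB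
  -- vector abbreviations
  set a := xfk1 + μx⁻¹ • zfk1 with hadef
  set b := wfk1 + μy • yfk1 with hbdef
  set u := zgk - zfk1 with hudef
  set v := ygk - yfk1 with hvdef
  -- real values of P
  have e1 : P zfk1 yfk1 = (((P zfk1 yfk1).toReal : ℝ) : EReal) :=
    (EReal.coe_toReal hfin1.ne (hPbot _ _)).symm
  have e0 : P zfk yfk = (((P zfk yfk).toReal : ℝ) : EReal) :=
    (EReal.coe_toReal hfin0.ne (hPbot _ _)).symm
  have es : P zstar ystar = (((P zstar ystar).toReal : ℝ) : EReal) :=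
    (EReal.coe_toReal hfinstar.ne (hPbot _ _)).symm
  set P1 := (P zfk1 yfk1).toReal with hP1def
  set P0 := (P zfk yfk).toReal with hP0def
  set Ps := (P zstar ystar).toReal with hPsdef
  have hPs0 : Ps ≤ P0 := by
    have h := hmin zfk yfk; rw [e0, es] at h; exact_mod_cast h
  have hsub1 : P1 + (⟪a, zstar - zfk1⟫ + ⟪b, ystar - yfk1⟫
      + 1 / (2 * μx) * ‖zstar - zfk1‖ ^ 2 + μy / 2 * ‖ystar - yfk1‖ ^ 2) ≤ Ps := by
    have h := hsubgrad zstar ystar; rw [e1, es] at h; exact_mod_cast h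
  have hsub0 : P1 + (⟪a, zfk - zfk1⟫ + ⟪b, yfk - yfk1⟫
      + 1 / (2 * μx) * ‖zfk - zfk1‖ ^ 2 + μy / 2 * ‖yfk - yfk1‖ ^ 2) ≤ P0 := by
    have h := hsubgrad zfk yfk; rw [e1, e0] at h; exact_mod_cast h
  -- orientation conversions
  have o1 : ⟪a, zstar - zfk1⟫ = -⟪zfk1 - zstar, a⟫ := by
    rw [real_inner_comm, ← neg_sub zfk1 zstar, inner_neg_left]
  have o2 : ⟪b, ystar - yfk1⟫ = -⟪yfk1 - ystar, b⟫ := by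
    rw [real_inner_comm, ← neg_sub yfk1 ystar, inner_neg_left]
  have o3 : ⟪a, zfk - zfk1⟫ = -⟪zfk1 - zfk, a⟫ := by
    rw [real_inner_comm, ← neg_sub zfk1 zfk, inner_neg_left]
  have o4 : ⟪b, yfk - yfk1⟫ = -⟪yfk1 - yfk, b⟫ := by
    rw [real_inner_comm, ← neg_sub yfk1 yfk, inner_neg_left]
  rw [o1, o2, norm_sub_rev zstar zfk1, norm_sub_rev ystar yfk1] at hsub1
  rw [o3, o4, norm_sub_rev zfk zfk1, norm_sub_rev yfk yfk1] at hsub0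
  -- strong convexity inequalities, cleared of denominators
  have hs1c : 2 * μx * (P1 - Ps) ≤ 2 * μx * ⟪zfk1 - zstar, a⟫ + 2 * μx * ⟪yfk1 - ystar, b⟫
      - ‖zfk1 - zstar‖ ^ 2 - μx * μy * ‖yfk1 - ystar‖ ^ 2 := by
    have H := mul_le_mul_of_nonneg_left hsub1 (by positivity : (0:ℝ) ≤ 2 * μx)
    have c1 : 2 * μx * (1 / (2 * μx) * ‖zfk1 - zstar‖ ^ 2) = ‖zfk1 - zstar‖ ^ 2 := by
      field_simp; try ring
    linarith only [H, c1]
  have hs0c : 2 * μx * (P1 - P0) ≤ 2 * μx * ⟪zfk1 - zfk, a⟫ + 2 * μx * ⟪yfk1 - yfk, b⟫ := by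
    have H := mul_le_mul_of_nonneg_left hsub0 (by positivity : (0:ℝ) ≤ 2 * μx)
    have c1 : 2 * μx * (1 / (2 * μx) * ‖zfk1 - zfk‖ ^ 2) = ‖zfk1 - zfk‖ ^ 2 := by
      field_simp; try ring
    have c2 : (0:ℝ) ≤ ‖zfk1 - zfk‖ ^ 2 := by positivity
    have c3 : (0:ℝ) ≤ μx * μy * ‖yfk1 - yfk‖ ^ 2 := by positivity
    linarith only [H, c1, c2, c3]
  -- step identities
  rw [hηz] at hzstep
  have ec : μx / 2 * μx⁻¹ = (1/2 : ℝ) := by field_simp; try ring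
  rw [ec] at hzstep
  have hz1 : zk1 - zstar = (1/2 : ℝ) • (zk - zstar) + (1/2 : ℝ) • (zfk1 - zstar)
      + (-(μx/2)) • a := by
    rw [hzstep]; module
  have hy1 : yk1 - ystar = (1 - ηy * μy) • (yk - ystar) + (ηy * μy) • (yfk1 - ystar)
      + (-ηy) • b := by
    rw [hystep]; module
  -- contraction of the z-distance
  have hZc : 2 * ‖zk1 - zstar‖ ^ 2 ≤ ‖zk - zstar‖ ^ 2 + ‖zfk1 - zstar‖ ^ 2
      - 2 * μx * ⟪zk - zstar, a⟫ + μx ^ 2 * ‖a‖ ^ 2 := by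
    rw [hz1, stmt8_combo3]
    have hsq1 : (0:ℝ) ≤ ‖(-1 : ℝ) • (zk - zstar) + (1 : ℝ) • (zfk1 - zstar) + μx • a‖ ^ 2 := sq_nonneg _
    rw [stmt8_combo3] at hsq1
    linarith only [hsq1]
  -- contraction of the y-distance
  have hYc : ‖yk1 - ystar‖ ^ 2 ≤ ‖yk - ystar‖ ^ 2 - ηy * μy * ‖yk - ystar‖ ^ 2
      + ηy * μy * ‖yfk1 - ystar‖ ^ 2 - 2 * ηy * ⟪yk - ystar, b⟫ + 2 * ηy ^ 2 * ‖b‖ ^ 2 := by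
    rw [hy1, stmt8_combo3]
    have hsq2 : (0:ℝ) ≤ ‖(ηy * μy) • (yk - ystar) + (-(ηy * μy)) • (yfk1 - ystar)
        + (-ηy) • b‖ ^ 2 := sq_nonneg _
    rw [stmt8_combo3] at hsq2
    have hsq3 : (0:ℝ) ≤ ‖(1:ℝ) • (yk - ystar) + (-1 : ℝ) • (yfk1 - ystar)
        + (0:ℝ) • b‖ ^ 2 := sq_nonneg _
    rw [stmt8_combo3] at hsq3
    have hq : (0:ℝ) ≤ ηy * μy * (1 - 2 * (ηy * μy)) :=
      mul_nonneg (by positivity) (by linarith)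
    have hpr := mul_nonneg hq (by linarith only [hsq3] :
      (0:ℝ) ≤ ‖yk - ystar‖ ^ 2 + ‖yfk1 - ystar‖ ^ 2 - 2 * ⟪yk - ystar, yfk1 - ystar⟫)
    linarith only [hsq2, hpr]
  -- coupling decomposition identities
  have hu : α • (zk - zstar) = u + (1 - α) • (zfk1 - zfk) + α • (zfk1 - zstar) := by
    rw [hudef, hzg]; module
  have hv : α • (yk - ystar) = v + (1 - α) • (yfk1 - yfk) + α • (yfk1 - ystar) := by
    rw [hvdef, hyg]; module
  have hdz : α * ⟪zk - zstar, a⟫ = ⟪u, a⟫ + (1 - α) * ⟪zfk1 - zfk, a⟫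
      + α * ⟪zfk1 - zstar, a⟫ := by
    rw [← real_inner_smul_left, hu]
    rw [inner_add_left, inner_add_left, real_inner_smul_left, real_inner_smul_left]
  have hdy : α * ⟪yk - ystar, b⟫ = ⟪v, b⟫ + (1 - α) * ⟪yfk1 - yfk, b⟫
      + α * ⟪yfk1 - ystar, b⟫ := by
    rw [← real_inner_smul_left, hv]
    rw [inner_add_left, inner_add_left, real_inner_smul_left, real_inner_smul_left]
  -- rewrite the inexactness condition
  have eT1 : zfk1 + (μx / 2) • (xfk1 - μx⁻¹ • zgk) = (1/2 : ℝ) • ((-1 : ℝ) • u + μx • a) := by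
    rw [hudef, hadef]; match_scalars <;> field_simp; try ring
  have eT2 : xfk1 + μx⁻¹ • zgk = μx⁻¹ • ((1 : ℝ) • u + μx • a) := by
    rw [hudef, hadef]; match_scalars <;> field_simp; try ring
  have eT3 : b + θy⁻¹ • (yfk1 - ygk) = (-θy⁻¹) • v + (1 : ℝ) • b := by
    rw [hvdef]; match_scalars <;> ring
  have eT4 : ‖yfk1 - ygk‖ = ‖v‖ := by rw [hvdef, norm_sub_rev]
  rw [eT1, eT2, eT3, eT4, stmt8_nsq, stmt8_nsq] at hinexact
  have hin2 : 2 * ‖(-1 : ℝ) • u + μx • a‖ ^ 2 + μx * θy * ‖(-θy⁻¹) • v + (1 : ℝ) • b‖ ^ 2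
      ≤ (1/8) * ‖(1 : ℝ) • u + μx • a‖ ^ 2 + μx * θy⁻¹ * ‖v‖ ^ 2 := by
    have H := mul_le_mul_of_nonneg_left hinexact hμx.le
    have c1 : μx * ((8 / μx) * ((1/2 : ℝ) ^ 2 * ‖(-1 : ℝ) • u + μx • a‖ ^ 2))
        = 2 * ‖(-1 : ℝ) • u + μx • a‖ ^ 2 := by field_simp; try ring; try ring
    have c2 : μx * ((μx / 8) * ((μx⁻¹) ^ 2 * ‖(1 : ℝ) • u + μx • a‖ ^ 2))
        = (1/8) * ‖(1 : ℝ) • u + μx • a‖ ^ 2 := by field_simp; try ring; try ring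
    linarith only [H, c1, c2]
  rw [stmt8_combo2 (-1 : ℝ) μx u a, stmt8_combo2 (-θy⁻¹) (1:ℝ) v b,
    stmt8_combo2 (1:ℝ) μx u a] at hin2
  -- key coupling inequality
  have hS : (0:ℝ) ≤ ‖(-1 : ℝ) • u + (3 * μx / 5) • a‖ ^ 2 := sq_nonneg _
  rw [stmt8_combo2] at hS
  have hcplc : α * μx ^ 2 * ‖a‖ ^ 2 + 2 * α * μx * ηy * ‖b‖ ^ 2
      ≤ 2 * μx * ⟪u, a⟫ + 2 * μx * ⟪v, b⟫ := by
    have h1 : (0:ℝ) ≤ (6/5 - α) * (μx ^ 2 * ‖a‖ ^ 2) :=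
      mul_nonneg (by linarith) (by positivity)
    have h2 : (0:ℝ) ≤ (θy - 2 * α * ηy) * (μx * ‖b‖ ^ 2) :=
      mul_nonneg (by linarith) (by positivity)
    have c3 : μx * θy * ((-θy⁻¹) ^ 2 * ‖v‖ ^ 2) = μx * θy⁻¹ * ‖v‖ ^ 2 := by
      field_simp; try ring
    have c4 : μx * θy * (2 * (-θy⁻¹) * 1 * ⟪v, b⟫) = -(2 * μx * ⟪v, b⟫) := by
      field_simp; try ring
    linarith only [hin2, hS, h1, h2, c3, c4]
  -- nonnegativity facts
  have hZnn : (0:ℝ) ≤ ‖zk - zstar‖ ^ 2 := sq_nonneg _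
  have hZ'nn : (0:ℝ) ≤ ‖yk - ystar‖ ^ 2 := sq_nonneg _
  -- assemble the clean (denominator-free) Lyapunov contraction
  have F1 := mul_le_mul_of_nonneg_left hZc (by positivity : (0:ℝ) ≤ ηy * α)
  have F2 := mul_le_mul_of_nonneg_left hYc (by positivity : (0:ℝ) ≤ μx * α)
  have F3 : 2 * μx * ηy * (α * ⟪zk - zstar, a⟫)
      = 2 * μx * ηy * (⟪u, a⟫ + (1 - α) * ⟪zfk1 - zfk, a⟫ + α * ⟪zfk1 - zstar, a⟫) := by
    rw [hdz]
  have F4 : 2 * μx * ηy * (α * ⟪yk - ystar, b⟫)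
      = 2 * μx * ηy * (⟪v, b⟫ + (1 - α) * ⟪yfk1 - yfk, b⟫ + α * ⟪yfk1 - ystar, b⟫) := by
    rw [hdy]
  have F5 := mul_le_mul_of_nonneg_left hs1c (by positivity : (0:ℝ) ≤ ηy * α)
  have F6 := mul_le_mul_of_nonneg_left hs0c
    (mul_nonneg hηypos.le (by linarith) : (0:ℝ) ≤ ηy * (1 - α))
  have F7 := mul_le_mul_of_nonneg_left hcplc hηypos.le
  have F8 : (0:ℝ) ≤ (1 - 2 * m) * (ηy * α * ‖zk - zstar‖ ^ 2) :=
    mul_nonneg (by linarith) (by positivity)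
  have F9 : (0:ℝ) ≤ (ηy * μy - m) * (μx * α * ‖yk - ystar‖ ^ 2) :=
    mul_nonneg (by linarith) (by positivity)
  have F10 : (0:ℝ) ≤ (α - m) * (2 * μx * ηy * (P0 - Ps)) :=
    mul_nonneg (by linarith) (mul_nonneg (by positivity) (by linarith))
  have H1 : 2 * ηy * α * ‖zk1 - zstar‖ ^ 2 + μx * α * ‖yk1 - ystar‖ ^ 2
        + 2 * μx * ηy * (P1 - Ps)
      ≤ ηy * α * ‖zk - zstar‖ ^ 2 + μx * α * ‖yk - ystar‖ ^ 2
        - μx * α * (ηy * μy) * ‖yk - ystar‖ ^ 2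
        + 2 * μx * ηy * (1 - α) * (P0 - Ps) := by
    linarith only [F1, F2, F3, F4, F5, F6, F7]
  have Gclean : 2 * ηy * α * ‖zk1 - zstar‖ ^ 2 + μx * α * ‖yk1 - ystar‖ ^ 2
        + 2 * μx * ηy * (P1 - Ps)
      ≤ (1 - m) * (2 * ηy * α * ‖zk - zstar‖ ^ 2 + μx * α * ‖yk - ystar‖ ^ 2
        + 2 * μx * ηy * (P0 - Ps)) := by
    linarith only [H1, F8, F9, F10]
  -- convert back to the original form
  have hpos : (0:ℝ) < μx * (ηy * α) := by positivity
  have main : (1 / ηz) * ‖zk1 - zstar‖ ^ 2 + (1 / ηy) * ‖yk1 - ystar‖ ^ 2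
        + (2 / α) * (P1 - Ps)
      ≤ (1 - m) * ((1 / ηz) * ‖zk - zstar‖ ^ 2 + (1 / ηy) * ‖yk - ystar‖ ^ 2
        + (2 / α) * (P0 - Ps)) := by
    rw [← mul_le_mul_iff_right₀ hpos]
    have hL : μx * (ηy * α) * ((1 / ηz) * ‖zk1 - zstar‖ ^ 2 + (1 / ηy) * ‖yk1 - ystar‖ ^ 2
          + (2 / α) * (P1 - Ps))
        = 2 * ηy * α * ‖zk1 - zstar‖ ^ 2 + μx * α * ‖yk1 - ystar‖ ^ 2
          + 2 * μx * ηy * (P1 - Ps) := by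
      rw [hηz]; field_simp; try ring
    have hR : μx * (ηy * α) * ((1 - m) * ((1 / ηz) * ‖zk - zstar‖ ^ 2
          + (1 / ηy) * ‖yk - ystar‖ ^ 2 + (2 / α) * (P0 - Ps)))
        = (1 - m) * (2 * ηy * α * ‖zk - zstar‖ ^ 2 + μx * α * ‖yk - ystar‖ ^ 2
          + 2 * μx * ηy * (P0 - Ps)) := by
      rw [hηz]; field_simp; try ring
    rw [hL, hR]; exact Gclean
  rw [e0, e1, es]
  push_cast
  exact_mod_cast main

end
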